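/- Let $(A, \mathfrak{m}, k)$ be a noetherian local ring and $(F^\bullet, d^\bullet)$ a cochain complex of free $A$-modules of finite rank. If for some $p$ there exist bases of $F^p$ and $F^{p+1}$ in which $d^p$ has matrix $\begin{pmatrix} 0 & \mathrm{Id} \\ 0 & 0 \end{pmatrix}$, then the base change map $\varphi^p \colon H^p(F^\bullet) \otimes_A k \to H^p(F^\bullet \otimes_A k)$ is an isomorphism. -/

import Mathlib

open TensorProduct IsLocalRing

open TensorProduct

section Defs

variable (A : Type*) [CommRing A] (k : Type*) [CommRing k] [Algebra A k]
variable {M0 M1 M2 : Type*} [AddCommGroup M0] [AddCommGroup M1] [AddCommGroup M2]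
  [Module A M0] [Module A M1] [Module A M2]

/-- Cohomology of `M0 → M1 → M2` at the middle spot. -/
abbrev coh (d0 : M0 →ₗ[A] M1) (d1 : M1 →ₗ[A] M2) : Type _ :=
  LinearMap.ker d1 ⧸ (LinearMap.range d0).comap (LinearMap.ker d1).subtype

variable (d0 : M0 →ₗ[A] M1) (d1 : M1 →ₗ[A] M2)

/-- The map on kernels induced by `x ↦ 1 ⊗ x`. -/
noncomputable def kerBaseChange : LinearMap.ker d1 →ₗ[A] LinearMap.ker (d1.baseChange k) :=
  LinearMap.codRestrict ((LinearMap.ker (d1.baseChange k)).restrictScalars A)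
    (((TensorProduct.mk A k M1) 1).comp (LinearMap.ker d1).subtype)
    (fun x => by
      simp [LinearMap.mem_ker, (LinearMap.mem_ker.mp x.2)])

/-- The natural base change map `k ⊗ H(F) → H(F ⊗ k)` on cohomology. -/
noncomputable def cohBaseChange :
    k ⊗[A] coh A d0 d1 →ₗ[k] coh k (d0.baseChange k) (d1.baseChange k) :=
  LinearMap.liftBaseChange k <|
    Submodule.liftQ _
      (((Submodule.mkQ _).restrictScalars A).comp (kerBaseChange A k d1))
      (by
        rintro ⟨x, hx⟩ ⟨y, rfl⟩
        have : kerBaseChange A k d1 ⟨d0 y, hx⟩ ∈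
            (LinearMap.range (d0.baseChange k)).comap
              (LinearMap.ker (d1.baseChange k)).subtype := by
          refine ⟨1 ⊗ₜ y, ?_⟩
          rfl
        simpa [LinearMap.mem_ker, Submodule.Quotient.mk_eq_zero] using this)

end Defs

set_option maxHeartbeats 1000000 in
theorem stmt13 {A : Type*} [CommRing A] [IsLocalRing A] [IsNoetherianRing A]
    {F0 : Type*} [AddCommGroup F0] [Module A F0] [Module.Free A F0] [Module.Finite A F0]
    {F1 : Type*} [AddCommGroup F1] [Module A F1] [Module.Free A F1] [Module.Finite A F1]
    {F2 : Type*} [AddCommGroup F2] [Module A F2] [Module.Free A F2] [Module.Finite A F2]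
    (d0 : F0 →ₗ[A] F1) (d1 : F1 →ₗ[A] F2) (hc : d1 ∘ₗ d0 = 0)
    (hmat : ∃ (r s t : ℕ) (b : Module.Basis (Fin r ⊕ Fin s) A F1)
      (b' : Module.Basis (Fin s ⊕ Fin t) A F2),
      LinearMap.toMatrix b b' d1 =
        Matrix.fromBlocks (0 : Matrix (Fin s) (Fin r) A) 1 0 0) :
    Function.Bijective (cohBaseChange A (ResidueField A) d0 d1) := by
  classical
  obtain ⟨r, s, t, b, b', hM⟩ := hmat
  set k := ResidueField A with hk
  -- description of d1 on the basis
  have hd1eq : d1 = Matrix.toLin b b' (Matrix.fromBlocks 0 1 0 0) := by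
    have := congrArg (Matrix.toLin b b') hM
    rwa [Matrix.toLin_toMatrix] at this
  have hd1l : ∀ i, d1 (b (Sum.inl i)) = 0 := by
    intro i
    rw [hd1eq, Matrix.toLin_self]
    simp [Fintype.sum_sum_type, Matrix.fromBlocks]
  have hd1r : ∀ j, d1 (b (Sum.inr j)) = b' (Sum.inl j) := by
    intro j
    rw [hd1eq, Matrix.toLin_self]
    simp [Fintype.sum_sum_type, Matrix.fromBlocks, Matrix.one_apply]
  -- the retraction π of d1
  set π : F2 →ₗ[A] F1 :=
    b'.constr A (Sum.elim (fun j => b (Sum.inr j)) (fun _ => 0)) with hπdef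
  have hπ : ∀ j, π (b' (Sum.inl j)) = b (Sum.inr j) := by
    intro j; simp [hπdef, Module.Basis.constr_basis]
  -- the projection onto the kernel
  set ss : F1 →ₗ[A] F1 := LinearMap.id - π ∘ₗ d1 with hssdef
  have h1 : d1 ∘ₗ ss = 0 := by
    apply b.ext
    rintro (i | j)
    · simp [hssdef, hd1l i]
    · simp [hssdef, hd1r j, hπ j]
  have h1' : ∀ x, d1 (ss x) = 0 := fun x => by
    simpa using DFunLike.congr_fun h1 x
  have h2 : ∀ x ∈ LinearMap.ker d1, ss x = x := by
    intro x hx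
    simp [hssdef, LinearMap.mem_ker.mp hx]
  set q : F1 →ₗ[A] LinearMap.ker d1 :=
    LinearMap.codRestrict (LinearMap.ker d1) ss
      (fun x => LinearMap.mem_ker.mpr (h1' x)) with hqdef
  set R : Submodule A (LinearMap.ker d1) :=
    (LinearMap.range d0).comap (LinearMap.ker d1).subtype with hRdef
  set θ : k ⊗[A] F1 →ₗ[k] k ⊗[A] (coh A d0 d1) :=
    (R.mkQ ∘ₗ q).baseChange k with hθdef
  -- θ kills the image of d0.baseChange
  have hqd0 : R.mkQ ∘ₗ (q ∘ₗ d0) = 0 := by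
    ext x
    simp only [LinearMap.comp_apply, LinearMap.zero_apply, Submodule.mkQ_apply,
      Submodule.Quotient.mk_eq_zero]
    refine ⟨x, ?_⟩
    show d0 x = ss (d0 x)
    have : d1 (d0 x) = 0 := by simpa using DFunLike.congr_fun hc x
    simp [hssdef, this]
  have hθd0 : ∀ w, θ (d0.baseChange k w) = 0 := by
    intro w
    have : θ ∘ₗ d0.baseChange k = 0 := by
      rw [hθdef, ← LinearMap.baseChange_comp, LinearMap.comp_assoc, hqd0]
      exact LinearMap.baseChange_zero
    simpa using DFunLike.congr_fun this w
  -- the inverse map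
  set R' : Submodule k (LinearMap.ker (d1.baseChange k)) :=
    (LinearMap.range (d0.baseChange k)).comap (LinearMap.ker (d1.baseChange k)).subtype
    with hR'def
  have hkill : ∀ y ∈ R', (θ ∘ₗ (LinearMap.ker (d1.baseChange k)).subtype) y = 0 := by
    rintro ⟨y, hy⟩ ⟨w, rfl⟩
    exact hθd0 w
  set Ψ :=
    Submodule.liftQ (M := LinearMap.ker (d1.baseChange k)) R' (θ ∘ₗ (LinearMap.ker (d1.baseChange k)).subtype) hkill with hΨdef
  -- base change of ss
  set sbc : k ⊗[A] F1 →ₗ[k] k ⊗[A] F1 := ss.baseChange k with hsbcdef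
  have hsbcker : ∀ u, d1.baseChange k (sbc u) = 0 := by
    intro u
    have : d1.baseChange k ∘ₗ sbc = 0 := by
      rw [hsbcdef, ← LinearMap.baseChange_comp, h1]
      exact LinearMap.baseChange_zero
    simpa using DFunLike.congr_fun this u
  have hsbcfix : ∀ u ∈ LinearMap.ker (d1.baseChange k), sbc u = u := by
    intro u hu
    rw [hsbcdef, hssdef, LinearMap.baseChange_sub, LinearMap.baseChange_id,
      LinearMap.baseChange_comp]
    simp [LinearMap.mem_ker.mp hu]
  -- key computation
  have Hcl : ∀ u : k ⊗[A] F1,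
      cohBaseChange A k d0 d1 (θ u) =
        R'.mkQ (LinearMap.codRestrict (LinearMap.ker (d1.baseChange k)) sbc
          (fun v => LinearMap.mem_ker.mpr (hsbcker v)) u) := by
    intro u
    induction u using TensorProduct.induction_on with
    | zero => simp
    | tmul c x =>
        have hθcx : θ (c ⊗ₜ x) = c ⊗ₜ (R.mkQ (q x)) := by
          rw [hθdef]; simp
        rw [hθcx]
        rw [cohBaseChange, LinearMap.liftBaseChange_tmul]
        rw [Submodule.mkQ_apply, Submodule.liftQ_apply]
        simp only [LinearMap.comp_apply, LinearMap.coe_restrictScalars,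
          Submodule.mkQ_apply, LinearMap.codRestrict_apply]
        rw [← Submodule.Quotient.mk_smul]
        congr 1
        apply Subtype.ext
        show c • ((1 : k) ⊗ₜ[A] (ss x)) = sbc (c ⊗ₜ x)
        rw [hsbcdef, LinearMap.baseChange_tmul, TensorProduct.smul_tmul', smul_eq_mul, mul_one]
    | add u v hu hv => simp [map_add, hu, hv]
  refine Function.bijective_iff_has_inverse.mpr ⟨Ψ, ?_, ?_⟩
  · -- left inverse
    intro z
    induction z using TensorProduct.induction_on with
    | zero => simp
    | tmul c m =>
        obtain ⟨x, rfl⟩ := R.mkQ_surjective m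
        have h1step : cohBaseChange A k d0 d1 (c ⊗ₜ R.mkQ x) =
            c • (Submodule.mkQ R' (kerBaseChange A k d1 x)) := by
          rfl
        rw [h1step, map_smul, hΨdef, Submodule.mkQ_apply]
        erw [Submodule.liftQ_apply]
        simp only [LinearMap.comp_apply, Submodule.coe_subtype]
        have : ((kerBaseChange A k d1 x : LinearMap.ker (d1.baseChange k)) : k ⊗[A] F1)
            = (1 : k) ⊗ₜ (x : F1) := rfl
        rw [this, hθdef, LinearMap.baseChange_tmul]
        have hqx : q (x : F1) = x := Subtype.ext (h2 _ x.2)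
        rw [LinearMap.comp_apply, hqx]
        rw [TensorProduct.smul_tmul', smul_eq_mul, mul_one]
    | add u v hu hv => simp [map_add, hu, hv]
  · -- right inverse
    intro w
    obtain ⟨y, rfl⟩ : ∃ y : LinearMap.ker (d1.baseChange k), w = R'.mkQ y := ⟨Quotient.out w, (Quotient.out_eq w).symm⟩
    rw [hΨdef, Submodule.mkQ_apply]
    erw [Submodule.liftQ_apply]
    simp only [LinearMap.comp_apply, Submodule.coe_subtype]
    rw [Hcl, Submodule.mkQ_apply]
    congr 1
    apply Subtype.ext
    show sbc (y : _) = (y : _)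
    exact hsbcfix _ y.2
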